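/- Let n ≥ 1 be an integer, let v = (v₁, v₂) ∈ ℤ² have both entries coprime to n, and let δ ∈ ℤ². Let Λ = { z + i·v/n : z ∈ ℤ², i ∈ ℤ } ⊂ ℝ², and suppose a, b ∈ ℝ² form a ℤ-basis of Λ (i.e., Λ = ℤa + ℤb) satisfying 0 < ‖a‖ ≤ ‖b‖ and |a·b| ≤ ‖a‖²/2, where ‖·‖ and · denote the Euclidean norm and inner product. Set y = (a·b)/‖a‖² and z = ‖b − y·a‖/‖a‖. Then the wrap-around fill distance of L(n,v,δ), namely sup_{u ∈ [0,1]²} min_{x ∈ L(n,v,δ)} w(u − x), equals ( √( z² + (z² − |y| + y²)² ) / (2z) ) · ‖a‖. -/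

import Mathlib

open Finset

/-- Distance from a real number to the nearest integer: w(t) = min over z in ZZ of |t - z|. -/
noncomputable def nid (t : ℝ) : ℝ := ⨅ z : ℤ, |t - (z : ℝ)|

/-- Wrap-around distance on ℝ^d. -/
noncomputable def wdist {d : ℕ} (u : Fin d → ℝ) : ℝ := Real.sqrt (∑ k, nid (u k) ^ 2)

/-- Lattice-based Latin hypercube design
L(n,v,δ) = { z + i·v/n + δ/n + 1_d/(2n) : z ∈ ℤ^d, i ∈ ℤ } ∩ [0,1]^d. -/
def LHDset (d n : ℕ) (v : Fin d → ℤ) (δ : Fin d → ℝ) : Set (Fin d → ℝ) :=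
  {x | (∃ (z : Fin d → ℤ) (i : ℤ),
          x = fun k => (z k : ℝ) + (i : ℝ) * (v k : ℝ) / n + δ k / n + 1 / (2 * n)) ∧
       ∀ k, x k ∈ Set.Icc (0 : ℝ) 1}

noncomputable def toV (u : Fin 2 → ℝ) : EuclideanSpace ℝ (Fin 2) :=
  (WithLp.equiv 2 (Fin 2 → ℝ)).symm u

lemma toV_sub (f g : Fin 2 → ℝ) : toV f - toV g = toV (fun k => f k - g k) := rfl
lemma toV_comb (c d : ℝ) (f g : Fin 2 → ℝ) :
    c • toV f + d • toV g = toV (fun k => c * f k + d * g k) := rfl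
lemma toV_neg (f : Fin 2 → ℝ) : toV (fun k => -(f k)) = - toV f := rfl

lemma norm_toV (u : Fin 2 → ℝ) : ‖toV u‖ = Real.sqrt (∑ k, u k ^ 2) := by
  rw [EuclideanSpace.norm_eq]; congr 1; apply Finset.sum_congr rfl; intro k _
  rw [Real.norm_eq_abs, sq_abs]; rfl

lemma eq_of_sq {x y : ℝ} (hx : 0 ≤ x) (hy : 0 ≤ y) (h : x ^ 2 = y ^ 2) : x = y := by nlinarith
lemma le_of_sq {x y : ℝ} (hx : 0 ≤ x) (hy : 0 ≤ y) (h : x ^ 2 ≤ y ^ 2) : x ≤ y := by nlinarith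

lemma nid_eq (t : ℝ) : nid t = |t - round t| := by
  unfold nid
  apply le_antisymm
  · exact ciInf_le ⟨0, by rintro s ⟨z, rfl⟩; positivity⟩ (round t)
  · exact le_ciInf fun z => round_le t z

lemma nid_nonneg (t : ℝ) : 0 ≤ nid t := le_ciInf fun z => abs_nonneg _

lemma nid_le (t : ℝ) (z : ℤ) : nid t ≤ |t - z| := by rw [nid_eq]; exact round_le t z

lemma wdist_eq (w : Fin 2 → ℝ) :
    wdist w = ‖toV (fun k => w k - (round (w k) : ℝ))‖ := by
  rw [norm_toV]; unfold wdist; congr 1; apply Finset.sum_congr rfl; intro k _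
  rw [nid_eq, sq_abs]

lemma wdist_le (w : Fin 2 → ℝ) (m : Fin 2 → ℤ) :
    wdist w ≤ ‖toV (fun k => w k - (m k : ℝ))‖ := by
  rw [norm_toV]; unfold wdist
  apply Real.sqrt_le_sqrt
  apply Finset.sum_le_sum
  intro k _
  have h1 := nid_le (w k) (m k)
  have h2 := nid_nonneg (w k)
  nlinarith [abs_nonneg (w k - (m k : ℝ)), sq_abs (w k - (m k : ℝ))]

lemma pair_cover {V : Type*} [NormedAddCommGroup V] [NormedSpace ℝ V]
    (O w v1 v2 : V) (R t c d : ℝ) (ht : 0 ≤ t) (hc : 0 ≤ c) (hd : 0 ≤ d)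
    (hs : t + c + d = 1) (h1 : ‖O - v1‖ ≤ R) (h2 : ‖O - v2‖ ≤ R)
    (hw : w = t • O + c • v1 + d • v2) :
    ‖w - v1‖ ≤ R ∨ ‖w - v2‖ ≤ R := by
  have hR : 0 ≤ R := le_trans (norm_nonneg _) h1
  have hvv : ‖v2 - v1‖ ≤ 2 * R := by
    calc ‖v2 - v1‖ ≤ ‖v2 - O‖ + ‖O - v1‖ := norm_sub_le_norm_sub_add_norm_sub _ _ _
      _ ≤ R + R := by rw [norm_sub_rev]; exact add_le_add h2 h1
      _ = 2 * R := by ring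
  rcases le_total d c with h | h
  · left
    have hc' : c = 1 - t - d := by linarith
    have e : w - v1 = t • (O - v1) + d • (v2 - v1) := by rw [hw, hc']; module
    calc ‖w - v1‖ = ‖t • (O - v1) + d • (v2 - v1)‖ := by rw [e]
      _ ≤ t * ‖O - v1‖ + d * ‖v2 - v1‖ := by
          refine le_trans (norm_add_le _ _) ?_
          rw [norm_smul, norm_smul, Real.norm_of_nonneg ht, Real.norm_of_nonneg hd]
      _ ≤ t * R + d * (2 * R) :=
          add_le_add (mul_le_mul_of_nonneg_left h1 ht) (mul_le_mul_of_nonneg_left hvv hd)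
      _ ≤ R := by nlinarith
  · right
    have hd' : d = 1 - t - c := by linarith
    have hvv' : ‖v1 - v2‖ ≤ 2 * R := by rwa [norm_sub_rev]
    have e : w - v2 = t • (O - v2) + c • (v1 - v2) := by rw [hw, hd']; module
    calc ‖w - v2‖ = ‖t • (O - v2) + c • (v1 - v2)‖ := by rw [e]
      _ ≤ t * ‖O - v2‖ + c * ‖v1 - v2‖ := by
          refine le_trans (norm_add_le _ _) ?_
          rw [norm_smul, norm_smul, Real.norm_of_nonneg ht, Real.norm_of_nonneg hc]
      _ ≤ t * R + c * (2 * R) :=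
          add_le_add (mul_le_mul_of_nonneg_left h2 ht) (mul_le_mul_of_nonneg_left hvv' hc)
      _ ≤ R := by nlinarith

lemma exists_min (l0 l1 l2 m0 m1 m2 : ℝ) (hm0 : 0 ≤ m0) (hm1 : 0 < m1) (hm2 : 0 < m2) :
    (l0 * m1 ≤ l1 * m0 ∧ l0 * m2 ≤ l2 * m0) ∨
    (l1 * m0 ≤ l0 * m1 ∧ l1 * m2 ≤ l2 * m1) ∨
    (l2 * m0 ≤ l0 * m2 ∧ l2 * m1 ≤ l1 * m2) := by
  rcases le_total (l0 * m1) (l1 * m0) with h01 | h01 <;>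
  rcases le_total (l0 * m2) (l2 * m0) with h02 | h02 <;>
  rcases le_total (l1 * m2) (l2 * m1) with h12 | h12
  · exact Or.inl ⟨h01, h02⟩
  · exact Or.inl ⟨h01, h02⟩
  · -- cyclic A : l0m1 ≤ l1m0, l2m0 ≤ l0m2, l1m2 ≤ l2m1
    refine Or.inl ⟨h01, ?_⟩
    have key : l0 * m2 * m1 ≤ l2 * m0 * m1 := by
      nlinarith [mul_le_mul_of_nonneg_right h01 hm2.le, mul_le_mul_of_nonneg_right h12 hm0]
    exact le_of_mul_le_mul_right key hm1
  · exact Or.inr (Or.inr ⟨h02, h12⟩)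
  · exact Or.inr (Or.inl ⟨h01, h12⟩)
  · -- cyclic B : l1m0 ≤ l0m1, l0m2 ≤ l2m0, l2m1 ≤ l1m2
    refine Or.inr (Or.inr ⟨?_, h12⟩)
    have key : l2 * m0 * m1 ≤ l0 * m2 * m1 := by
      nlinarith [mul_le_mul_of_nonneg_right h01 hm2.le, mul_le_mul_of_nonneg_right h12 hm0]
    exact le_of_mul_le_mul_right key hm1
  · exact Or.inr (Or.inl ⟨h01, h12⟩)
  · exact Or.inr (Or.inr ⟨h02, h12⟩)

lemma tri_cover_aux {V : Type*} [NormedAddCommGroup V] [NormedSpace ℝ V]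
    (v0 v1 v2 O w : V) (R m0 m1 m2 l0 l1 l2 : ℝ)
    (hm0 : 0 < m0) (hms : m0 + m1 + m2 = 1)
    (hl0 : 0 ≤ l0) (hl1 : 0 ≤ l1) (hl2 : 0 ≤ l2) (hls : l0 + l1 + l2 = 1)
    (c1 : l0 * m1 ≤ l1 * m0) (c2 : l0 * m2 ≤ l2 * m0)
    (hO : O = m0 • v0 + m1 • v1 + m2 • v2) (hw : w = l0 • v0 + l1 • v1 + l2 • v2)
    (h1 : ‖O - v1‖ ≤ R) (h2 : ‖O - v2‖ ≤ R) :
    ‖w - v1‖ ≤ R ∨ ‖w - v2‖ ≤ R := by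
  have hm0' : m0 ≠ 0 := hm0.ne'
  set t := l0 / m0 with htdef
  have ht : 0 ≤ t := div_nonneg hl0 hm0.le
  have htm : t * m0 = l0 := div_mul_cancel₀ _ hm0'
  have hc : 0 ≤ l1 - t * m1 := by
    rw [sub_nonneg, htdef, div_mul_eq_mul_div, div_le_iff₀ hm0]; linarith
  have hd : 0 ≤ l2 - t * m2 := by
    rw [sub_nonneg, htdef, div_mul_eq_mul_div, div_le_iff₀ hm0]; linarith
  have e : t * m0 + t * m1 + t * m2 = t := by linear_combination t * hms
  have hsum : t + (l1 - t * m1) + (l2 - t * m2) = 1 := by linarith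
  have hw' : w = t • O + (l1 - t * m1) • v1 + (l2 - t * m2) • v2 := by
    rw [hw, hO]; match_scalars <;> (rw [htdef]; field_simp; try ring)
  exact pair_cover O w v1 v2 R t _ _ ht hc hd hsum h1 h2 hw'

lemma tri_cover {V : Type*} [NormedAddCommGroup V] [NormedSpace ℝ V]
    (v0 v1 v2 O w : V) (R m0 m1 m2 l0 l1 l2 : ℝ)
    (hm0 : 0 ≤ m0) (hm1 : 0 < m1) (hm2 : 0 < m2) (hms : m0 + m1 + m2 = 1)
    (hl0 : 0 ≤ l0) (hl1 : 0 ≤ l1) (hl2 : 0 ≤ l2) (hls : l0 + l1 + l2 = 1)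
    (hO : O = m0 • v0 + m1 • v1 + m2 • v2) (hw : w = l0 • v0 + l1 • v1 + l2 • v2)
    (h0 : ‖O - v0‖ ≤ R) (h1 : ‖O - v1‖ ≤ R) (h2 : ‖O - v2‖ ≤ R) :
    ‖w - v0‖ ≤ R ∨ ‖w - v1‖ ≤ R ∨ ‖w - v2‖ ≤ R := by
  rcases exists_min l0 l1 l2 m0 m1 m2 hm0 hm1 hm2 with ⟨c1, c2⟩ | ⟨c1, c2⟩ | ⟨c1, c2⟩
  · by_cases h0' : m0 = 0
    · rw [h0', mul_zero] at c1
      have hl0' : l0 = 0 := le_antisymm (by nlinarith) hl0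
      have := pair_cover O w v1 v2 R 0 l1 l2 le_rfl hl1 hl2 (by linarith) h1 h2
        (by rw [hw, hl0']; match_scalars <;> ring)
      tauto
    · have := tri_cover_aux v0 v1 v2 O w R m0 m1 m2 l0 l1 l2
        (lt_of_le_of_ne hm0 (Ne.symm h0')) hms hl0 hl1 hl2 hls c1 c2 hO hw h1 h2
      tauto
  · have := tri_cover_aux v1 v0 v2 O w R m1 m0 m2 l1 l0 l2 hm1 (by linarith)
      hl1 hl0 hl2 (by linarith) c1 c2 (by rw [hO]; module) (by rw [hw]; module) h0 h2
    tauto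
  · have := tri_cover_aux v2 v0 v1 O w R m2 m0 m1 l2 l0 l1 hm2 (by linarith)
      hl2 hl0 hl1 (by linarith) c1 c2 (by rw [hO]; module) (by rw [hw]; module) h0 h1
    tauto

lemma wdist_nonneg (w : Fin 2 → ℝ) : 0 ≤ wdist w := Real.sqrt_nonneg _

lemma Qnorm (a b : Fin 2 → ℝ) (s t : ℝ) :
    ‖toV (fun k => s * a k + t * b k)‖ ^ 2 =
      s ^ 2 * (a 0 ^ 2 + a 1 ^ 2) + 2 * (s * t) * (a 0 * b 0 + a 1 * b 1)
        + t ^ 2 * (b 0 ^ 2 + b 1 ^ 2) := by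
  rw [norm_toV, Real.sq_sqrt (by positivity), Fin.sum_univ_two]; ring

lemma intkey (p : ℤ) : 0 ≤ (p : ℝ) * ((p : ℝ) - 1) := by
  rcases le_or_gt p 0 with h | h
  · have h' : (p : ℝ) ≤ 0 := by exact_mod_cast h
    nlinarith
  · have h' : (1 : ℝ) ≤ (p : ℝ) := by exact_mod_cast h
    nlinarith

lemma intineq (E F G : ℝ) (hE : 0 < E) (hEG : E ≤ G) (hF0 : 0 ≤ F) (hF2 : 2 * F ≤ E)
    (p q : ℤ) :
    0 ≤ E * ((p : ℝ) * ((p : ℝ) - 1)) + G * ((q : ℝ) * ((q : ℝ) - 1))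
        + 2 * F * ((p : ℝ) * (q : ℝ)) := by
  have hp := intkey p
  have hq := intkey q
  rcases le_or_gt 0 ((p : ℝ) * (q : ℝ)) with h | h
  · have h1 : 0 ≤ E * ((p:ℝ) * ((p:ℝ) - 1)) := mul_nonneg hE.le hp
    have h2 : 0 ≤ G * ((q:ℝ) * ((q:ℝ) - 1)) := mul_nonneg (by linarith) hq
    have h3 : 0 ≤ 2 * F * ((p:ℝ) * (q:ℝ)) := mul_nonneg (by linarith) h
    linarith
  · have hpqZ : (p : ℝ) * (q : ℝ) ≤ -1 := by
      have : p * q < 0 := by exact_mod_cast h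
      have : p * q ≤ -1 := by omega
      calc (p:ℝ) * q = ((p*q : ℤ) : ℝ) := by push_cast; ring
        _ ≤ -1 := by exact_mod_cast this
    have hs := intkey (p + q)
    push_cast at hs
    have k3 : 0 ≤ (p:ℝ) * ((p:ℝ) - 1) + (q:ℝ) * ((q:ℝ) - 1) + (p:ℝ) * (q:ℝ) := by nlinarith
    have k1 : E * ((q:ℝ) * ((q:ℝ) - 1)) ≤ G * ((q:ℝ) * ((q:ℝ) - 1)) :=
      mul_le_mul_of_nonneg_right hEG hq
    have k2 : E * ((p:ℝ) * (q:ℝ)) ≤ 2 * F * ((p:ℝ) * (q:ℝ)) :=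
      mul_le_mul_of_nonpos_right hF2 h.le
    nlinarith [mul_nonneg hE.le k3]

lemma rhs_eq (E G m y z : ℝ) (hE : 0 < E) (hD : 0 < E * G - m ^ 2)
    (hy : |y| = m / E) (hy2 : y ^ 2 = m ^ 2 / E ^ 2)
    (hz2 : z ^ 2 = (E * G - m ^ 2) / E ^ 2) (hz0 : 0 < z) :
    Real.sqrt (z ^ 2 + (z ^ 2 - |y| + y ^ 2) ^ 2) / (2 * z) * Real.sqrt E
      = Real.sqrt (E * ((E * G - m ^ 2) + (G - m) ^ 2) / (4 * (E * G - m ^ 2))) := by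
  apply eq_of_sq
  · apply mul_nonneg (div_nonneg (Real.sqrt_nonneg _) (by linarith)) (Real.sqrt_nonneg _)
  · exact Real.sqrt_nonneg _
  rw [mul_pow, div_pow, Real.sq_sqrt (by positivity), Real.sq_sqrt hE.le,
    Real.sq_sqrt (by positivity)]
  have h4 : (2 * z) ^ 2 = 4 * z ^ 2 := by ring
  rw [h4, hz2, hy, hy2]
  have hE' : E ≠ 0 := hE.ne'
  have hD' : E * G - m ^ 2 ≠ 0 := hD.ne'
  field_simp
  ring

section Lat
variable (n : ℕ) (v δ : Fin 2 → ℤ) (a b : Fin 2 → ℝ)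

noncomputable def Cc (n : ℕ) (δ : Fin 2 → ℤ) : Fin 2 → ℝ :=
  fun k => (δ k : ℝ) / n + 1 / (2 * n)

variable (hbasis : {u : Fin 2 → ℝ | ∃ (z : Fin 2 → ℤ) (i : ℤ),
        u = fun k => (z k : ℝ) + (i : ℝ) * (v k : ℝ) / n}
      = {u : Fin 2 → ℝ | ∃ p q : ℤ, u = fun k => (p : ℝ) * a k + (q : ℝ) * b k})

include hbasis

lemma basis_unit (j : Fin 2) :
    ∃ p q : ℤ, ∀ k, (if k = j then (1:ℝ) else 0) = (p : ℝ) * a k + (q : ℝ) * b k := by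
  have hmem : (fun k => if k = j then (1:ℝ) else 0) ∈
      {u : Fin 2 → ℝ | ∃ (z : Fin 2 → ℤ) (i : ℤ),
        u = fun k => (z k : ℝ) + (i : ℝ) * (v k : ℝ) / n} := by
    refine ⟨fun k => if k = j then 1 else 0, 0, ?_⟩
    funext k; by_cases h : k = j <;> simp [h]
  rw [hbasis] at hmem
  obtain ⟨p, q, h⟩ := hmem
  exact ⟨p, q, fun k => congrFun h k⟩

lemma ints_comb (m : Fin 2 → ℤ) :
    ∃ p q : ℤ, ∀ k, (m k : ℝ) = (p : ℝ) * a k + (q : ℝ) * b k := by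
  obtain ⟨p0, q0, h0⟩ := basis_unit n v a b hbasis 0
  obtain ⟨p1, q1, h1⟩ := basis_unit n v a b hbasis 1
  have h00 := h0 0; have h01 := h0 1; have h10 := h1 0; have h11 := h1 1
  simp at h00 h01 h10 h11
  refine ⟨m 0 * p0 + m 1 * p1, m 0 * q0 + m 1 * q1, fun k => ?_⟩
  fin_cases k
  · show (m 0 : ℝ) = ((m 0 * p0 + m 1 * p1 : ℤ) : ℝ) * a 0 + ((m 0 * q0 + m 1 * q1 : ℤ) : ℝ) * b 0
    push_cast
    linear_combination (m 0 : ℝ) * h00 + (m 1 : ℝ) * h10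
  · show (m 1 : ℝ) = ((m 0 * p0 + m 1 * p1 : ℤ) : ℝ) * a 1 + ((m 0 * q0 + m 1 * q1 : ℤ) : ℝ) * b 1
    push_cast
    linear_combination (m 0 : ℝ) * h01 + (m 1 : ℝ) * h11

lemma det_ne : a 0 * b 1 - a 1 * b 0 ≠ 0 := by
  obtain ⟨p0, q0, h0⟩ := basis_unit n v a b hbasis 0
  obtain ⟨p1, q1, h1⟩ := basis_unit n v a b hbasis 1
  have h00 := h0 0; have h01 := h0 1; have h10 := h1 0; have h11 := h1 1
  simp at h00 h01 h10 h11
  intro hD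
  have key : (1:ℝ) = 0 := by
    linear_combination ((p1:ℝ) * a 1 + (q1:ℝ) * b 1) * h00 + h11
      - ((p1:ℝ) * a 0 + (q1:ℝ) * b 0) * h01 + ((p0:ℝ) * (q1:ℝ) - (p1:ℝ) * (q0:ℝ)) * hD
  exact one_ne_zero key

lemma design_sub (x : Fin 2 → ℝ) (hx : x ∈ LHDset 2 n v (fun k => (δ k : ℝ))) :
    ∃ p q : ℤ, ∀ k, x k - Cc n δ k = (p : ℝ) * a k + (q : ℝ) * b k := by
  obtain ⟨⟨z, i, hzi⟩, _⟩ := hx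
  have hmem : (fun k => x k - Cc n δ k) ∈
      {u : Fin 2 → ℝ | ∃ (z : Fin 2 → ℤ) (i : ℤ),
        u = fun k => (z k : ℝ) + (i : ℝ) * (v k : ℝ) / n} := by
    refine ⟨z, i, ?_⟩
    funext k
    have hxk : x k = (z k : ℝ) + (i : ℝ) * (v k : ℝ) / n + (δ k : ℝ) / n + 1 / (2 * n) :=
      congrFun hzi k
    rw [hxk]; simp only [Cc]; ring
  rw [hbasis] at hmem
  obtain ⟨p, q, h⟩ := hmem
  exact ⟨p, q, fun k => congrFun h k⟩

lemma design_mk (p q : ℤ) :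
    ∃ x ∈ LHDset 2 n v (fun k => (δ k : ℝ)), ∃ m : Fin 2 → ℤ,
      ∀ k, x k = (p : ℝ) * a k + (q : ℝ) * b k + Cc n δ k - m k := by
  have hmem : (fun k => (p : ℝ) * a k + (q : ℝ) * b k) ∈
      {u : Fin 2 → ℝ | ∃ p q : ℤ, u = fun k => (p : ℝ) * a k + (q : ℝ) * b k} := ⟨p, q, rfl⟩
  rw [← hbasis] at hmem
  obtain ⟨z, i, hzi⟩ := hmem
  set f : Fin 2 → ℝ := fun k => (p : ℝ) * a k + (q : ℝ) * b k + Cc n δ k with hf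
  refine ⟨fun k => f k - ⌊f k⌋, ⟨⟨fun k => z k - ⌊f k⌋, i, ?_⟩,
      fun k => ⟨?_, ?_⟩⟩, fun k => ⌊f k⌋, fun k => by simp only [hf]⟩
  · funext k
    have hk : (p : ℝ) * a k + (q : ℝ) * b k = (z k : ℝ) + (i : ℝ) * (v k : ℝ) / n :=
      congrFun hzi k
    simp only [hf, Cc]
    push_cast
    linear_combination hk
  · have := Int.floor_le (f k); simp only; linarith
  · have := Int.lt_floor_add_one (f k); simp only; linarith

end Lat

set_option maxHeartbeats 1000000 in
lemma key (n : ℕ) (v δ : Fin 2 → ℤ) (a b : Fin 2 → ℝ)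
    (hbasis : {u : Fin 2 → ℝ | ∃ (z : Fin 2 → ℤ) (i : ℤ),
        u = fun k => (z k : ℝ) + (i : ℝ) * (v k : ℝ) / n}
      = {u : Fin 2 → ℝ | ∃ p q : ℤ, u = fun k => (p : ℝ) * a k + (q : ℝ) * b k})
    (hE : 0 < a 0 ^ 2 + a 1 ^ 2)
    (hEG : a 0 ^ 2 + a 1 ^ 2 ≤ b 0 ^ 2 + b 1 ^ 2)
    (hF0 : 0 ≤ a 0 * b 0 + a 1 * b 1)
    (hF2 : 2 * (a 0 * b 0 + a 1 * b 1) ≤ a 0 ^ 2 + a 1 ^ 2) :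
    sSup {r : ℝ | ∃ u : Fin 2 → ℝ, (∀ k, u k ∈ Set.Icc (0 : ℝ) 1) ∧
        r = sInf {s : ℝ | ∃ x ∈ LHDset 2 n v (fun k => (δ k : ℝ)), s = wdist (u - x)}}
      = Real.sqrt ((a 0 ^ 2 + a 1 ^ 2) *
          (((a 0 ^ 2 + a 1 ^ 2) * (b 0 ^ 2 + b 1 ^ 2) - (a 0 * b 0 + a 1 * b 1) ^ 2)
            + ((b 0 ^ 2 + b 1 ^ 2) - (a 0 * b 0 + a 1 * b 1)) ^ 2) /
          (4 * ((a 0 ^ 2 + a 1 ^ 2) * (b 0 ^ 2 + b 1 ^ 2) - (a 0 * b 0 + a 1 * b 1) ^ 2))) := by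
  have hDne : a 0 * b 1 - a 1 * b 0 ≠ 0 := det_ne n v a b hbasis
  obtain ⟨E, hEd⟩ : ∃ E : ℝ, a 0 ^ 2 + a 1 ^ 2 = E := ⟨_, rfl⟩
  obtain ⟨F, hFd⟩ : ∃ F : ℝ, a 0 * b 0 + a 1 * b 1 = F := ⟨_, rfl⟩
  obtain ⟨G, hGd⟩ : ∃ G : ℝ, b 0 ^ 2 + b 1 ^ 2 = G := ⟨_, rfl⟩
  rw [hEd] at hE hEG hF2 ⊢
  rw [hFd] at hF0 hF2 ⊢
  rw [hGd] at hEG ⊢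
  obtain ⟨Dl, hDld⟩ : ∃ D : ℝ, E * G - F ^ 2 = D := ⟨_, rfl⟩
  rw [hDld]
  have hGpos : 0 < G := lt_of_lt_of_le hE hEG
  have hEF : 0 < E - F := by linarith
  have hGF : 0 < G - F := by linarith
  have hDsq : Dl = (a 0 * b 1 - a 1 * b 0) ^ 2 := by
    rw [← hDld, ← hEd, ← hFd, ← hGd]; ring
  have hDlpos : 0 < Dl := by
    rcases lt_or_gt_of_ne hDne with h | h <;> rw [hDsq] <;> nlinarith
  have hnum : 0 < E * (Dl + (G - F) ^ 2) := mul_pos hE (by nlinarith)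
  have h4Dl : (0:ℝ) < 4 * Dl := by linarith
  obtain ⟨α₀, hα₀d⟩ : ∃ x : ℝ, G * (E - F) / (2 * Dl) = x := ⟨_, rfl⟩
  obtain ⟨β₀, hβ₀d⟩ : ∃ x : ℝ, E * (G - F) / (2 * Dl) = x := ⟨_, rfl⟩
  obtain ⟨Rv, hRvd⟩ : ∃ r : ℝ, Real.sqrt (E * (Dl + (G - F) ^ 2) / (4 * Dl)) = r := ⟨_, rfl⟩
  rw [hRvd]
  have hRv2 : Rv ^ 2 = E * (Dl + (G - F) ^ 2) / (4 * Dl) := by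
    rw [← hRvd]; exact Real.sq_sqrt (div_pos hnum h4Dl).le
  have hRvpos : 0 < Rv := by
    rw [← hRvd]; exact Real.sqrt_pos.mpr (div_pos hnum h4Dl)
  have Qn : ∀ s t : ℝ, ‖toV (fun k => s * a k + t * b k)‖ ^ 2
      = s ^ 2 * E + 2 * (s * t) * F + t ^ 2 * G := by
    intro s t
    rw [Qnorm a b s t, hEd, hFd, hGd]
  have hOQ : ∀ s t : ℝ, ‖toV (fun k => (α₀ - s) * a k + (β₀ - t) * b k)‖ ^ 2
      = Rv ^ 2 + (E * (s * (s - 1)) + G * (t * (t - 1)) + 2 * F * (s * t)) := by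
    intro s t
    have h1 : E * G - F ^ 2 ≠ 0 := by rw [hDld]; exact hDlpos.ne'
    have h1' : G * E - F ^ 2 ≠ 0 := by rw [mul_comm]; exact h1
    rw [Qn (α₀ - s) (β₀ - t), hRv2, ← hα₀d, ← hβ₀d, ← hDld]
    field_simp
    ring
  have norm_eq_Rv : ∀ s t : ℝ, s * (s - 1) = 0 → t * (t - 1) = 0 → s * t = 0 →
      ‖toV (fun k => (α₀ - s) * a k + (β₀ - t) * b k)‖ = Rv := by
    intro s t hs ht hst
    have h := hOQ s t
    rw [hs, ht, hst] at h
    apply eq_of_sq (norm_nonneg _) hRvpos.le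
    rw [h]; ring
  have hlow : ∀ p q : ℤ,
      Rv ≤ ‖toV (fun k => (α₀ - (p:ℝ)) * a k + (β₀ - (q:ℝ)) * b k)‖ := by
    intro p q
    have h := hOQ (p:ℝ) (q:ℝ)
    have h2 := intineq E F G hE hEG hF0 hF2 p q
    apply le_of_sq hRvpos.le (norm_nonneg _)
    rw [h]; linarith
  obtain ⟨Oc, hOcd⟩ : ∃ O : Fin 2 → ℝ, (fun k => α₀ * a k + β₀ * b k) = O := ⟨_, rfl⟩
  have hc0 : ‖toV Oc - 0‖ ≤ Rv := by
    rw [sub_zero]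
    have e : toV Oc = toV (fun k => (α₀ - 0) * a k + (β₀ - 0) * b k) :=
      congrArg toV (funext fun k => by simp only [← hOcd]; ring)
    rw [e]; exact (norm_eq_Rv 0 0 (by ring) (by ring) (by ring)).le
  have hca : ‖toV Oc - toV a‖ ≤ Rv := by
    rw [toV_sub]
    have e : toV (fun k => Oc k - a k) = toV (fun k => (α₀ - 1) * a k + (β₀ - 0) * b k) :=
      congrArg toV (funext fun k => by simp only [← hOcd]; ring)
    rw [e]; exact (norm_eq_Rv 1 0 (by ring) (by ring) (by ring)).le
  have hcb : ‖toV Oc - toV b‖ ≤ Rv := by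
    rw [toV_sub]
    have e : toV (fun k => Oc k - b k) = toV (fun k => (α₀ - 0) * a k + (β₀ - 1) * b k) :=
      congrArg toV (funext fun k => by simp only [← hOcd]; ring)
    rw [e]; exact (norm_eq_Rv 0 1 (by ring) (by ring) (by ring)).le
  have hm0 : 0 ≤ 1 - α₀ - β₀ := by
    have h1 : (0:ℝ) < 2 * Dl := by linarith
    have h2 : α₀ + β₀ ≤ 1 := by
      rw [← hα₀d, ← hβ₀d, ← add_div, div_le_one h1, ← hDld]
      nlinarith [mul_nonneg hF0 (show (0:ℝ) ≤ E + G - 2*F by linarith)]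
    linarith
  have hm1 : 0 < α₀ := by
    rw [← hα₀d]; exact div_pos (mul_pos hGpos hEF) (by linarith)
  have hm2 : 0 < β₀ := by
    rw [← hβ₀d]; exact div_pos (mul_pos hE hGF) (by linarith)
  have hOcomb : toV Oc = (1 - α₀ - β₀) • (0 : EuclideanSpace ℝ (Fin 2))
      + α₀ • toV a + β₀ • toV b := by
    rw [smul_zero, zero_add, toV_comb]
    exact congrArg toV hOcd.symm
  -- upper bound for arbitrary u
  have hub : ∀ u : Fin 2 → ℝ,
      ∃ x ∈ LHDset 2 n v (fun k => (δ k : ℝ)), wdist (u - x) ≤ Rv := by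
    intro u
    obtain ⟨w, hwdef⟩ : ∃ w : Fin 2 → ℝ, (fun k => u k - Cc n δ k) = w := ⟨_, rfl⟩
    obtain ⟨A, hA⟩ : ∃ A : ℝ,
      (w 0 * b 1 - w 1 * b 0) / (a 0 * b 1 - a 1 * b 0) = A := ⟨_, rfl⟩
    obtain ⟨B, hB⟩ : ∃ B : ℝ,
      (a 0 * w 1 - a 1 * w 0) / (a 0 * b 1 - a 1 * b 0) = B := ⟨_, rfl⟩
    have hwk : ∀ k, w k = A * a k + B * b k := by
      rw [Fin.forall_fin_two]
      have hD' : b 1 * a 0 - b 0 * a 1 ≠ 0 := by intro h; apply hDne; linarith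
      constructor
      · rw [← hA, ← hB]; field_simp; ring
      · rw [← hA, ← hB]; field_simp; ring
    obtain ⟨P, Q, hPQ⟩ : ∃ P Q : ℤ,
        ‖toV (fun k => w k - ((P : ℝ) * a k + (Q : ℝ) * b k))‖ ≤ Rv := by
      obtain ⟨p, hp⟩ : ∃ p : ℤ, ⌊A⌋ = p := ⟨_, rfl⟩
      obtain ⟨q, hq⟩ : ∃ q : ℤ, ⌊B⌋ = q := ⟨_, rfl⟩
      have hpA : (p:ℝ) ≤ A := hp ▸ Int.floor_le A
      have hpA1 : A < (p:ℝ) + 1 := by rw [← hp]; push_cast; exact Int.lt_floor_add_one A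
      have hqB : (q:ℝ) ≤ B := hq ▸ Int.floor_le B
      have hqB1 : B < (q:ℝ) + 1 := by rw [← hq]; push_cast; exact Int.lt_floor_add_one B
      rcases le_total (A - (p:ℝ) + (B - (q:ℝ))) 1 with hcase | hcase
      · have hcomb : toV (fun k => (A - (p:ℝ)) * a k + (B - (q:ℝ)) * b k)
            = (1 - (A - (p:ℝ)) - (B - (q:ℝ))) • (0 : EuclideanSpace ℝ (Fin 2))
              + (A - (p:ℝ)) • toV a + (B - (q:ℝ)) • toV b := by
          rw [smul_zero, zero_add, toV_comb]
        have htri := tri_cover (0 : EuclideanSpace ℝ (Fin 2)) (toV a) (toV b) (toV Oc)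
          (toV (fun k => (A - (p:ℝ)) * a k + (B - (q:ℝ)) * b k)) Rv
          (1 - α₀ - β₀) α₀ β₀ (1 - (A - (p:ℝ)) - (B - (q:ℝ))) (A - (p:ℝ)) (B - (q:ℝ))
          hm0 hm1 hm2 (by ring) (by linarith) (by linarith) (by linarith) (by ring)
          hOcomb hcomb hc0 hca hcb
        rcases htri with h | h | h
        · refine ⟨p, q, ?_⟩
          have e : (fun k => w k - ((p : ℝ) * a k + (q : ℝ) * b k))
              = fun k => (A - (p:ℝ)) * a k + (B - (q:ℝ)) * b k :=
            funext fun k => by rw [hwk k]; ring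
          rw [e]
          rw [sub_zero] at h
          exact h
        · refine ⟨p + 1, q, ?_⟩
          have e : (fun k => w k - (((p + 1 : ℤ) : ℝ) * a k + (q : ℝ) * b k))
              = fun k => ((A - (p:ℝ)) * a k + (B - (q:ℝ)) * b k) - a k :=
            funext fun k => by rw [hwk k]; push_cast; ring
          rw [e, ← toV_sub]
          exact h
        · refine ⟨p, q + 1, ?_⟩
          have e : (fun k => w k - ((p : ℝ) * a k + ((q + 1 : ℤ) : ℝ) * b k))
              = fun k => ((A - (p:ℝ)) * a k + (B - (q:ℝ)) * b k) - b k :=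
            funext fun k => by rw [hwk k]; push_cast; ring
          rw [e, ← toV_sub]
          exact h
      · have hcomb : toV (fun k => ((p:ℝ) + 1 - A) * a k + ((q:ℝ) + 1 - B) * b k)
            = ((A - (p:ℝ)) + (B - (q:ℝ)) - 1) • (0 : EuclideanSpace ℝ (Fin 2))
              + ((p:ℝ) + 1 - A) • toV a + ((q:ℝ) + 1 - B) • toV b := by
          rw [smul_zero, zero_add, toV_comb]
        have htri := tri_cover (0 : EuclideanSpace ℝ (Fin 2)) (toV a) (toV b) (toV Oc)
          (toV (fun k => ((p:ℝ) + 1 - A) * a k + ((q:ℝ) + 1 - B) * b k)) Rv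
          (1 - α₀ - β₀) α₀ β₀ ((A - (p:ℝ)) + (B - (q:ℝ)) - 1) ((p:ℝ) + 1 - A) ((q:ℝ) + 1 - B)
          hm0 hm1 hm2 (by ring) (by linarith) (by linarith) (by linarith) (by ring)
          hOcomb hcomb hc0 hca hcb
        rcases htri with h | h | h
        · refine ⟨p + 1, q + 1, ?_⟩
          have e : (fun k => w k - (((p + 1 : ℤ) : ℝ) * a k + ((q + 1 : ℤ) : ℝ) * b k))
              = fun k => -(((p:ℝ) + 1 - A) * a k + ((q:ℝ) + 1 - B) * b k) :=
            funext fun k => by rw [hwk k]; push_cast; ring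
          rw [e, toV_neg, norm_neg]
          rw [sub_zero] at h
          exact h
        · refine ⟨p, q + 1, ?_⟩
          have e : (fun k => w k - ((p : ℝ) * a k + ((q + 1 : ℤ) : ℝ) * b k))
              = fun k => -((((p:ℝ) + 1 - A) * a k + ((q:ℝ) + 1 - B) * b k) - a k) :=
            funext fun k => by rw [hwk k]; push_cast; ring
          rw [e, toV_neg, norm_neg, ← toV_sub]
          exact h
        · refine ⟨p + 1, q, ?_⟩
          have e : (fun k => w k - (((p + 1 : ℤ) : ℝ) * a k + (q : ℝ) * b k))
              = fun k => -((((p:ℝ) + 1 - A) * a k + ((q:ℝ) + 1 - B) * b k) - b k) :=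
            funext fun k => by rw [hwk k]; push_cast; ring
          rw [e, toV_neg, norm_neg, ← toV_sub]
          exact h
    obtain ⟨x, hx, m, hm⟩ := design_mk n v δ a b hbasis P Q
    refine ⟨x, hx, ?_⟩
    have hle := wdist_le (u - x) m
    have e2 : (fun k => (u - x) k - (m k : ℝ))
        = fun k => w k - ((P:ℝ) * a k + (Q:ℝ) * b k) := by
      funext k
      rw [Pi.sub_apply, hm k]
      simp only [← hwdef]
      ring
    rw [e2] at hle
    exact le_trans hle hPQ
  -- lower bound point
  obtain ⟨us, husd⟩ : ∃ us : Fin 2 → ℝ,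
    (fun k => Oc k + Cc n δ k - (⌊Oc k + Cc n δ k⌋ : ℝ)) = us := ⟨_, rfl⟩
  have husbox : ∀ k, us k ∈ Set.Icc (0:ℝ) 1 := by
    intro k
    have h1 := Int.floor_le (Oc k + Cc n δ k)
    have h2 := Int.lt_floor_add_one (Oc k + Cc n δ k)
    constructor <;> simp only [← husd] <;> linarith
  have hlbpt : ∀ s ∈ {s : ℝ | ∃ x ∈ LHDset 2 n v (fun k => (δ k : ℝ)), s = wdist (us - x)},
      Rv ≤ s := by
    rintro s ⟨x, hx, rfl⟩
    obtain ⟨P1, Q1, hx'⟩ := design_sub n v δ a b hbasis x hx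
    obtain ⟨P2, Q2, hic⟩ := ints_comb n v a b hbasis
      (fun k => ⌊Oc k + Cc n δ k⌋ + round ((us - x) k))
    rw [wdist_eq (us - x)]
    have e : (fun k => (us - x) k - (round ((us - x) k) : ℝ))
        = fun k => (α₀ - ((P1 + P2 : ℤ):ℝ)) * a k + (β₀ - ((Q1 + Q2 : ℤ):ℝ)) * b k := by
      funext k
      have h1 := hx' k
      have h2 := hic k
      push_cast at h2 ⊢
      simp only [Pi.sub_apply, ← husd, ← hOcd] at h2 ⊢
      linear_combination -h1 - h2
    rw [e]
    exact hlow (P1 + P2) (Q1 + Q2)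
  obtain ⟨x₀, hx₀, -, -⟩ := design_mk n v δ a b hbasis 0 0
  apply le_antisymm
  · apply csSup_le
    · exact ⟨_, (fun _ => 0), fun k => ⟨le_rfl, zero_le_one⟩, rfl⟩
    · rintro r ⟨u, hu, rfl⟩
      obtain ⟨x, hx, hxle⟩ := hub u
      refine le_trans (csInf_le ⟨0, ?_⟩ ⟨x, hx, rfl⟩) hxle
      rintro s ⟨x', hx', rfl⟩
      exact wdist_nonneg _
  · apply le_csSup_of_le
    · refine ⟨Rv, ?_⟩
      rintro r ⟨u, hu, rfl⟩
      obtain ⟨x, hx, hxle⟩ := hub u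
      refine le_trans (csInf_le ⟨0, ?_⟩ ⟨x, hx, rfl⟩) hxle
      rintro s ⟨x', hx', rfl⟩
      exact wdist_nonneg _
    · exact ⟨us, husbox, rfl⟩
    · apply le_csInf
      · exact ⟨wdist (us - x₀), x₀, hx₀, rfl⟩
      · exact hlbpt


set_option maxHeartbeats 2000000 in
/-- formula for the wrap-around fill distance of a two-dimensional
L(n,v,δ) in terms of a reduced basis (a, b) of the underlying lattice. -/
theorem stmt_10 (n : ℕ) (hn : 1 ≤ n) (v δ : Fin 2 → ℤ)
    (hco : ∀ k, IsCoprime (v k) (n : ℤ))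
    (a b : Fin 2 → ℝ)
    (hbasis : {u : Fin 2 → ℝ | ∃ (z : Fin 2 → ℤ) (i : ℤ),
        u = fun k => (z k : ℝ) + (i : ℝ) * (v k : ℝ) / n}
      = {u : Fin 2 → ℝ | ∃ p q : ℤ, u = fun k => (p : ℝ) * a k + (q : ℝ) * b k})
    (ha : 0 < Real.sqrt (∑ k, a k ^ 2))
    (hab : Real.sqrt (∑ k, a k ^ 2) ≤ Real.sqrt (∑ k, b k ^ 2))
    (hip : |∑ k, a k * b k| ≤ (∑ k, a k ^ 2) / 2)
    (y z : ℝ)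
    (hy : y = (∑ k, a k * b k) / (∑ k, a k ^ 2))
    (hz : z = Real.sqrt (∑ k, (b k - y * a k) ^ 2) / Real.sqrt (∑ k, a k ^ 2)) :
    sSup {r : ℝ | ∃ u : Fin 2 → ℝ, (∀ k, u k ∈ Set.Icc (0 : ℝ) 1) ∧
        r = sInf {s : ℝ | ∃ x ∈ LHDset 2 n v (fun k => (δ k : ℝ)), s = wdist (u - x)}}
      = (Real.sqrt (z ^ 2 + (z ^ 2 - |y| + y ^ 2) ^ 2) / (2 * z)) *
          Real.sqrt (∑ k, a k ^ 2) := by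
  simp only [Fin.sum_univ_two] at ha hab hip hy hz ⊢
  have hE : 0 < a 0 ^ 2 + a 1 ^ 2 := Real.sqrt_pos.mp ha
  have hG0 : (0:ℝ) ≤ b 0 ^ 2 + b 1 ^ 2 := by positivity
  have hEG : a 0 ^ 2 + a 1 ^ 2 ≤ b 0 ^ 2 + b 1 ^ 2 := by
    nlinarith [Real.sq_sqrt hE.le, Real.sq_sqrt hG0, hab,
      Real.sqrt_nonneg (a 0 ^ 2 + a 1 ^ 2), Real.sqrt_nonneg (b 0 ^ 2 + b 1 ^ 2)]
  have habs := abs_le.mp hip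
  have hDne : a 0 * b 1 - a 1 * b 0 ≠ 0 := det_ne n v a b hbasis
  have hΔ : 0 < (a 0 ^ 2 + a 1 ^ 2) * (b 0 ^ 2 + b 1 ^ 2) - (a 0 * b 0 + a 1 * b 1) ^ 2 := by
    have h : (a 0 ^ 2 + a 1 ^ 2) * (b 0 ^ 2 + b 1 ^ 2) - (a 0 * b 0 + a 1 * b 1) ^ 2
        = (a 0 * b 1 - a 1 * b 0) ^ 2 := by ring
    rcases lt_or_gt_of_ne hDne with hh | hh <;> rw [h] <;> nlinarith
  have hN : (b 0 - y * a 0) ^ 2 + (b 1 - y * a 1) ^ 2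
      = ((a 0 ^ 2 + a 1 ^ 2) * (b 0 ^ 2 + b 1 ^ 2) - (a 0 * b 0 + a 1 * b 1) ^ 2)
        / (a 0 ^ 2 + a 1 ^ 2) := by
    rw [hy]; field_simp; ring
  have hNpos : 0 < (b 0 - y * a 0) ^ 2 + (b 1 - y * a 1) ^ 2 := by
    rw [hN]; exact div_pos hΔ hE
  have hzpos : 0 < z := by
    rw [hz]; exact div_pos (Real.sqrt_pos.mpr hNpos) ha
  have hz2 : z ^ 2 = ((a 0 ^ 2 + a 1 ^ 2) * (b 0 ^ 2 + b 1 ^ 2) - (a 0 * b 0 + a 1 * b 1) ^ 2)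
      / (a 0 ^ 2 + a 1 ^ 2) ^ 2 := by
    rw [hz, div_pow, Real.sq_sqrt hNpos.le, Real.sq_sqrt hE.le, hN, div_div]
    have h : (a 0 ^ 2 + a 1 ^ 2) * (a 0 ^ 2 + a 1 ^ 2) = (a 0 ^ 2 + a 1 ^ 2) ^ 2 := by ring
    rw [h]
  rcases le_or_gt 0 (a 0 * b 0 + a 1 * b 1) with hF | hF
  · rw [key n v δ a b hbasis hE hEG hF (by linarith [habs.2])]
    refine (rhs_eq (a 0 ^ 2 + a 1 ^ 2) (b 0 ^ 2 + b 1 ^ 2) (a 0 * b 0 + a 1 * b 1) y z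
      hE hΔ ?_ ?_ hz2 hzpos).symm
    · rw [hy, abs_div, abs_of_nonneg hF, abs_of_pos hE]
    · rw [hy, div_pow]
  · have hbasis' : {u : Fin 2 → ℝ | ∃ (z : Fin 2 → ℤ) (i : ℤ),
        u = fun k => (z k : ℝ) + (i : ℝ) * (v k : ℝ) / n}
      = {u : Fin 2 → ℝ | ∃ p q : ℤ, u = fun k => (p : ℝ) * a k + (q : ℝ) * (-b k)} := by
      rw [hbasis]
      ext u
      simp only [Set.mem_setOf_eq]
      constructor
      · rintro ⟨p, q, rfl⟩
        refine ⟨p, -q, ?_⟩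
        funext k; push_cast; ring
      · rintro ⟨p, q, rfl⟩
        refine ⟨p, -q, ?_⟩
        funext k; push_cast; ring
    have hkey := key n v δ a (fun k => -b k) hbasis' hE
      (by beta_reduce; nlinarith [hEG])
      (by beta_reduce; nlinarith [hF])
      (by beta_reduce; nlinarith [habs.1])
    rw [hkey]
    beta_reduce
    rw [rhs_eq (a 0 ^ 2 + a 1 ^ 2) (b 0 ^ 2 + b 1 ^ 2) (-(a 0 * b 0 + a 1 * b 1)) y z
      hE (by nlinarith [hΔ]) (by rw [hy, abs_div, abs_of_neg hF, abs_of_pos hE])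
      (by rw [hy, div_pow, neg_sq]) (by rw [neg_sq]; exact hz2) hzpos]
    congr 1
    ring
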